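/- Let P be a small additive category (preadditive with finite biproducts) that is idempotent complete. Then every compact projective object of Rep(P) is isomorphic to a representable presheaf Hom_P(−, S) for some object S of P. -/

import Mathlib

/-!
Let `P` be a small additive category (preadditive with finite biproducts) which is idempotent
complete.  Then every compact projective object of `QRep P` (the category of additive functors
`Pᵒᵖ ⥤ AddCommGrp`) is isomorphic to a representable presheaf `Hom_P(-, S)` for some `S : P`.
Compact means that `Hom(Q, -)` preserves filtered colimits, and projective means that
`Hom(Q, -)` preserves epimorphisms.
-/

open CategoryTheory CategoryTheory.Limits Opposite

universe u

universe w w' v₁ v₂ u₁ u₂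

section Aux

/-- Additive functors are closed under colimits of any shape. -/
lemma additive_closed (P : Type u) [SmallCategory P] [Preadditive P]
    (J : Type w) [Category.{w'} J] [HasColimitsOfShape J AddCommGrpCat.{u}] :
    ObjectProperty.IsClosedUnderColimitsOfShape (fun F : Pᵒᵖ ⥤ AddCommGrpCat.{u} => F.Additive) J := by
  constructor
  rintro F0 ⟨⟨⟨D, cι, hc⟩, hD⟩⟩
  let c : Cocone D := Cocone.mk _ cι
  change F0.Additive
  change c.pt.Additive
  constructor
  intro X Y f g
  have h := fun (Z : Pᵒᵖ) => isColimitOfPreserves ((evaluation Pᵒᵖ AddCommGrpCat.{u}).obj Z) hc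
  apply (h X).hom_ext
  intro j
  haveI : (D.obj j).Additive := hD j
  have n1 := (c.ι.app j).naturality (f + g)
  have n2 := (c.ι.app j).naturality f
  have n3 := (c.ι.app j).naturality g
  dsimp at n1 n2 n3 ⊢
  rw [← n1, Functor.map_add, Preadditive.add_comp, Preadditive.comp_add, ← n2, ← n3]

/-- A universe-polymorphic version of `preservesFiniteBiproductsOfAdditive`. -/
lemma preservesBiproductsOfShape_of_additive {C : Type u₁} {D : Type u₂}
    [Category.{v₁} C] [Category.{v₂} D] [Preadditive C] [Preadditive D]
    (F : C ⥤ D) [F.Additive] (J : Type w) [Fintype J] :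
    PreservesBiproductsOfShape J F where
  preserves {f} :=
    ⟨fun {b} hb =>
      ⟨((F.mapBicone b).whiskerIsBilimitIff (Fintype.equivFin J).symm).toFun
        (isBilimitOfPreserves F
          ((b.whiskerIsBilimitIff (Fintype.equivFin J).symm).invFun hb))⟩⟩

instance preadditiveYonedaAdditive (P : Type u) [SmallCategory P] [Preadditive P] :
    (preadditiveYoneda (C := P)).Additive := by
  constructor
  intro X Y f g
  ext Z h
  show (h : unop Z ⟶ X) ≫ (f + g) = (h : unop Z ⟶ X) ≫ f + (h : unop Z ⟶ X) ≫ g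
  exact Preadditive.comp_add _ _ _ _ _ _

end Aux

/-- The full subcategory of `Pᵒᵖ ⥤ AddCommGrp` spanned by the additive functors. -/
def QRep (P : Type u) [SmallCategory P] [Preadditive P] :=
  ObjectProperty.FullSubcategory (fun F : Pᵒᵖ ⥤ AddCommGrpCat.{u} => F.Additive)

instance (P : Type u) [SmallCategory P] [Preadditive P] : Category (QRep P) :=
  ObjectProperty.FullSubcategory.category _

/-- The representable additive presheaf `Hom_P(-, S)` as an object of `QRep P`. -/
def reprQRep (P : Type u) [SmallCategory P] [Preadditive P] (S : P) : QRep P :=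
  ⟨preadditiveYoneda.obj S, inferInstance⟩

section QRepAux

variable {P : Type u} [SmallCategory P] [Preadditive P]

noncomputable instance qrepCreates (J : Type w) [Category.{w'} J]
    [HasColimitsOfShape J AddCommGrpCat.{u}] :
    CreatesColimitsOfShape J
      (ObjectProperty.ι (fun F : Pᵒᵖ ⥤ AddCommGrpCat.{u} => F.Additive)) :=
  haveI := additive_closed P J
  createsColimitsOfShapeFullSubcategoryInclusion _ _

instance qrepHasColimits (J : Type w) [Category.{w'} J]
    [HasColimitsOfShape J AddCommGrpCat.{u}] : HasColimitsOfShape J (QRep P) :=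
  haveI := additive_closed P J
  hasColimitsOfShape_of_closedUnderColimits _ _

instance : HasFiniteCoproducts (QRep P) :=
  ⟨fun n =>
    haveI h : HasColimitsOfShape (Discrete (Fin n)) AddCommGrpCat.{u} :=
      (AddCommGrpCat.hasColimitsOfSize.{u, 0, 0}).has_colimits_of_shape _
    qrepHasColimits _⟩

/-- The map `reprQRep P X ⟶ Q` given by an element `x : Q(X)`. -/
def elMap (Q : QRep P) (X : P) (x : Q.1.obj (op X)) : reprQRep P X ⟶ Q :=
  haveI : Q.1.Additive := Q.2
  ObjectProperty.homMk <|
  { app := fun Y => AddCommGrpCat.ofHom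
      { toFun := fun g => Q.1.map g.op x
        map_zero' := by erw [op_zero, Functor.map_zero]; rfl
        map_add' := fun g h => by
          show Q.1.map (g + h : Y.unop ⟶ X).op x = _
          erw [op_add, Functor.map_add]; rfl }
    naturality := fun Y Y' g => by
      ext h
      show Q.1.map (g.unop ≫ h : Y'.unop ⟶ X).op x = Q.1.map g (Q.1.map h.op x)
      erw [op_comp, Functor.map_comp]; rfl }

lemma elMap_comp_apply {Q T : QRep P} (X : P) (x : Q.1.obj (op X)) (u : Q ⟶ T) :
    (elMap Q X x ≫ u).hom.app (op X) (𝟙 X) = u.hom.app (op X) x := by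
  haveI : Q.1.Additive := Q.2
  change u.hom.app (op X) ((elMap Q X x).hom.app (op X) (𝟙 X)) = _
  congr 1
  show (Q.1.map (𝟙 X).op) x = x
  erw [op_id, CategoryTheory.Functor.map_id]; rfl

end QRepAux

theorem stmt2 (P : Type u) [SmallCategory P] [Preadditive P]
    [HasFiniteBiproducts P] [IsIdempotentComplete P] (Q : QRep P)
    (hcompact : Nonempty (PreservesFilteredColimitsOfSize.{u, u}
      (coyoneda.obj (op Q))))
    (hproj : (coyoneda.obj (op Q)).PreservesEpimorphisms) :
    ∃ S : P, Nonempty (Q ≅ reprQRep P S) := by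
  classical
  obtain ⟨hcompact⟩ := hcompact
  set ι := ObjectProperty.ι (fun F : Pᵒᵖ ⥤ AddCommGrpCat.{u} => F.Additive) with hι
  -- Step 1: a jointly epimorphic family of representables over `Q`.
  set I : Type u := Σ X : P, Q.1.obj (op X) with hI
  set f : I → QRep P := fun i => reprQRep P i.1 with hf
  set π : (∐ f) ⟶ Q := Sigma.desc (fun i => elMap Q i.1 i.2) with hπdef
  have hπ : Epi π := by
    constructor
    intro T u v huv
    have key : ∀ (X : P) (x : Q.1.obj (op X)), u.hom.app (op X) x = v.hom.app (op X) x := by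
      intro X x
      have h1 : elMap Q X x ≫ u = elMap Q X x ≫ v := by
        have h2 : (Sigma.ι f ⟨X, x⟩ ≫ π) ≫ u = (Sigma.ι f ⟨X, x⟩ ≫ π) ≫ v := by
          rw [Category.assoc, Category.assoc, huv]
        rwa [hπdef, Sigma.ι_desc] at h2
      calc u.hom.app (op X) x = (elMap Q X x ≫ u).hom.app (op X) (𝟙 X) := (elMap_comp_apply X x u).symm
        _ = (elMap Q X x ≫ v).hom.app (op X) (𝟙 X) := by rw [h1]
        _ = v.hom.app (op X) x := elMap_comp_apply X x v
    apply ι.map_injective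
    ext Y y
    exact key Y.unop y
  -- Step 2: projectivity gives a section of `π`.
  have hsurj : Function.Surjective ((coyoneda.obj (op Q)).map π) := by
    rw [← epi_iff_surjective]
    exact hproj.preserves π
  obtain ⟨s, hs⟩ := hsurj (𝟙 Q)
  have hs' : s ≫ π = 𝟙 Q := hs
  -- Step 3: compactness: the section factors through a finite subcoproduct.
  set F : Discrete I ⥤ QRep P := Discrete.functor f with hF
  set D := CoproductsFromFiniteFiltered.liftToFinsetObj F with hD
  set φ : (∐ f) ≅ colimit D :=
    colimit.isoColimitCocone (CoproductsFromFiniteFiltered.liftToFinsetColimitCocone F) with hφ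
  have hcol := isColimitOfPreserves (coyoneda.obj (op Q)) (colimit.isColimit D)
  obtain ⟨j₀, t, ht⟩ := Types.jointly_surjective_of_isColimit hcol (s ≫ φ.hom)
  have ht' : t ≫ colimit.ι D j₀ = s ≫ φ.hom := ht
  set r : D.obj j₀ ⟶ Q := colimit.ι D j₀ ≫ φ.inv ≫ π with hr
  have htr : t ≫ r = 𝟙 Q := by
    rw [hr, ← Category.assoc, ht', Category.assoc, Iso.hom_inv_id_assoc, hs']
  -- Step 4: the finite subcoproduct is representable.
  set g : { x // x ∈ j₀ } → P := fun x => (Discrete.as x.1).1 with hg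
  haveI : PreservesBiproductsOfShape { x // x ∈ j₀ } (preadditiveYoneda (C := P)) :=
    preservesBiproductsOfShape_of_additive _ _
  haveI : HasFiniteBiproducts (Pᵒᵖ ⥤ AddCommGrpCat.{u}) :=
    HasFiniteBiproducts.of_hasFiniteProducts
  set S₀ : P := ⨁ g with hS₀
  haveI : HasColimitsOfShape (Discrete { x // x ∈ j₀ }) AddCommGrpCat.{u} :=
    (AddCommGrpCat.hasColimitsOfSize.{u, u, u}).has_colimits_of_shape _
  haveI hQc : HasColimitsOfShape (Discrete { x // x ∈ j₀ }) (QRep P) := qrepHasColimits _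
  haveI : HasCoproduct (C := ObjectProperty.FullSubcategory
      (fun F : Pᵒᵖ ⥤ AddCommGrpCat.{u} => F.Additive)) (fun x : j₀ => F.obj x.1) :=
    hQc.has_colimit _
  have i1 : ι.obj (D.obj j₀) ≅ ∐ fun x : j₀ => ι.obj (F.obj x.1) :=
    PreservesCoproduct.iso ι _
  have i2 : (∐ fun x : j₀ => ι.obj (F.obj x.1)) ≅ ⨁ fun x : j₀ => preadditiveYoneda.obj (g x) :=
    (biproduct.isoCoproduct _).symm
  have i3 : (⨁ fun x : j₀ => preadditiveYoneda.obj (g x)) ≅ preadditiveYoneda.obj S₀ :=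
    (preadditiveYoneda.mapBiproduct g).symm
  have Φ : D.obj j₀ ≅ reprQRep P S₀ :=
    (Functor.FullyFaithful.ofFullyFaithful ι).preimageIso (i1 ≪≫ i2 ≪≫ i3)
  -- Step 5: `Q` is a retract of a representable; split the idempotent.
  set t' : Q ⟶ reprQRep P S₀ := t ≫ Φ.hom with ht'def
  set r' : reprQRep P S₀ ⟶ Q := Φ.inv ≫ r with hr'def
  have htr' : t' ≫ r' = 𝟙 Q := by
    rw [ht'def, hr'def, Category.assoc, Iso.hom_inv_id_assoc, htr]
  set e : preadditiveYoneda.obj S₀ ⟶ preadditiveYoneda.obj S₀ := ι.map (r' ≫ t') with he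
  set e₀ : S₀ ⟶ S₀ := preadditiveYoneda.preimage e with he₀
  have hmape : preadditiveYoneda.map e₀ = e := Functor.map_preimage _ _
  have hidem : e₀ ≫ e₀ = e₀ := by
    apply preadditiveYoneda.map_injective
    rw [Functor.map_comp, hmape, he]
    show ι.map (r' ≫ t') ≫ ι.map (r' ≫ t') = ι.map (r' ≫ t')
    refine (ι.map_comp _ _).symm.trans ?_
    congr 1
    show ((r' ≫ t') ≫ r' ≫ t' : reprQRep P S₀ ⟶ reprQRep P S₀) = r' ≫ t'
    rw [Category.assoc, ← Category.assoc t' r' t', htr', Category.id_comp]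
  obtain ⟨S, is, q, hiq, hqi⟩ := IsIdempotentComplete.idempotents_split S₀ e₀ hidem
  refine ⟨S, ⟨?_⟩⟩
  -- Step 6: assemble the isomorphism.
  set yq : reprQRep P S₀ ⟶ reprQRep P S := { hom := preadditiveYoneda.map q } with hyqdef
  set yi : reprQRep P S ⟶ reprQRep P S₀ := { hom := preadditiveYoneda.map is } with hyidef
  have hqi' : yq ≫ yi = r' ≫ t' := by
    apply ι.map_injective
    show preadditiveYoneda.map q ≫ preadditiveYoneda.map is = ι.map (r' ≫ t')
    rw [← Functor.map_comp, hqi, hmape, he]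
  refine
    { hom := t' ≫ yq
      inv := yi ≫ r'
      hom_inv_id := ?_
      inv_hom_id := ?_ }
  · rw [Category.assoc, ← Category.assoc yq yi r', hqi']
    simp only [← Category.assoc]
    rw [htr', Category.id_comp, htr']
  · rw [Category.assoc, ← Category.assoc r' t' yq, ← hqi']
    have hh : is ≫ (q ≫ is) ≫ q = 𝟙 S := by
      calc is ≫ (q ≫ is) ≫ q = (is ≫ q) ≫ (is ≫ q) := by simp only [Category.assoc]
        _ = 𝟙 S := by rw [hiq, Category.id_comp]
    apply ι.map_injective
    show preadditiveYoneda.map is ≫ (preadditiveYoneda.map q ≫ preadditiveYoneda.map is) ≫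
      preadditiveYoneda.map q = 𝟙 (preadditiveYoneda.obj S)
    rw [← Functor.map_comp, ← Functor.map_comp, ← Functor.map_comp, hh]
    exact preadditiveYoneda.map_id S
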